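/- Let G₁ and G₂ be topological groupoids with G₁ proper, and let f : G₁ → G₂ be a surjective continuous groupoid morphism such that the induced map f' : G₁⁽⁰⁾ → G₂⁽⁰⁾ on unit spaces is proper. Then G₂ is proper. -/

import Mathlib

open Set Topology

/-- A space is locally compact in the sense of the paper if every point has a
compact (quasi-compact and Hausdorff) neighborhood. -/
def LocCompact (X : Type*) [TopologicalSpace X] : Prop :=
  ∀ x : X, ∃ K : Set X, K ∈ nhds x ∧ IsCompact K ∧ T2Space K

/-- A topological groupoid with arrow space `G` and unit space `G0`:
range `r`, source `s`, unit inclusion, inverse and (partial) composition,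
all continuous, satisfying the groupoid axioms; the unit space is embedded
in the arrow space. -/
structure GroupoidStruct (G G0 : Type*) [TopologicalSpace G] [TopologicalSpace G0] where
  r : G → G0
  s : G → G0
  unit : G0 → G
  inv : G → G
  comp : (g h : G) → s g = r h → G
  r_unit : ∀ x, r (unit x) = x
  s_unit : ∀ x, s (unit x) = x
  r_comp : ∀ g h hh, r (comp g h hh) = r g
  s_comp : ∀ g h hh, s (comp g h hh) = s h
  r_inv : ∀ g, r (inv g) = s g
  s_inv : ∀ g, s (inv g) = r g
  comp_unit_left : ∀ g, comp (unit (r g)) g (s_unit (r g)) = g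
  comp_unit_right : ∀ g, comp g (unit (s g)) ((r_unit (s g)).symm) = g
  comp_inv_self : ∀ g, comp g (inv g) ((r_inv g).symm) = unit (r g)
  inv_comp_self : ∀ g, comp (inv g) g (s_inv g) = unit (s g)
  assoc : ∀ g h k (hgh : s g = r h) (hhk : s h = r k),
    comp (comp g h hgh) k ((s_comp g h hgh).trans hhk) =
    comp g (comp h k hhk) (hgh.trans (r_comp h k hhk).symm)
  continuous_r : Continuous r
  continuous_s : Continuous s
  continuous_unit : Continuous unit
  continuous_inv : Continuous inv
  continuous_comp : Continuous (fun p : {p : G × G // s p.1 = r p.2} => comp p.1.1 p.1.2 p.2)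
  isEmbedding_unit : Topology.IsEmbedding unit

/-- If `G₁` is proper and `f : G₁ → G₂` is a surjective continuous groupoid morphism
whose induced map on unit spaces is proper, then `G₂` is proper. -/
theorem stmt10 {G1 G10 G2 G20 : Type*} [TopologicalSpace G1] [TopologicalSpace G10]
    [TopologicalSpace G2] [TopologicalSpace G20]
    (𝔾₁ : GroupoidStruct G1 G10) (𝔾₂ : GroupoidStruct G2 G20)
    (hprop1 : IsProperMap (fun g => (𝔾₁.r g, 𝔾₁.s g)))
    (F : G1 → G2) (F0 : G10 → G20) (hFc : Continuous F)
    (hr : ∀ g, 𝔾₂.r (F g) = F0 (𝔾₁.r g)) (hs : ∀ g, 𝔾₂.s (F g) = F0 (𝔾₁.s g))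
    (hunit : ∀ x, F (𝔾₁.unit x) = 𝔾₂.unit (F0 x))
    (hcomp : ∀ g h (hgh : 𝔾₁.s g = 𝔾₁.r h),
      F (𝔾₁.comp g h hgh) =
        𝔾₂.comp (F g) (F h) (((hs g).trans (congrArg F0 hgh)).trans (hr h).symm))
    (hFsurj : Function.Surjective F)
    (hF0 : IsProperMap F0) :
    IsProperMap (fun g => (𝔾₂.r g, 𝔾₂.s g)) := by
  have hcomp2 : IsProperMap ((fun g : G2 => (𝔾₂.r g, 𝔾₂.s g)) ∘ F) := by
    have : ((fun g : G2 => (𝔾₂.r g, 𝔾₂.s g)) ∘ F) =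
        (Prod.map F0 F0) ∘ (fun g : G1 => (𝔾₁.r g, 𝔾₁.s g)) := by
      funext g; simp [hr, hs]
    rw [this]
    exact (hF0.prodMap hF0).comp hprop1
  exact isProperMap_of_comp_of_surj hFc
    (𝔾₂.continuous_r.prodMk 𝔾₂.continuous_s) hcomp2 hFsurj
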